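/- Let the initial weights W_l(0) follow scaled-orthogonal initialization as in the context, with rank(Φ) ≤ r and m := d − 2r > 0. Then there exist orthonormal families {v_i}_{i=1}^m and {u_i}_{i=1}^m in ℝ^d such that for every i ∈ {1,…,m}: W_1(0)·v_i = ε_1·u_i, W_1(0)ᵀ·u_i = ε_1·v_i, Φᵀ·(W_L(0)·W_{L−1}(0)⋯W_2(0))·u_i = 0, and Φ·v_i = 0. -/

import Mathlib

open Matrix BigOperators Filter

noncomputable section

/-- Auxiliary: product of `k` consecutive matrices ending (on the right) at index `i`. -/
def chainAux {n : Type*} [Fintype n] [DecidableEq n]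
    (W : ℕ → Matrix n n ℝ) (i : ℕ) : ℕ → Matrix n n ℝ
  | 0 => 1
  | (k+1) => W (i + k) * chainAux W i k

/-- `chain W i j = W j * W (j-1) * ⋯ * W i`; equals `1` when `j < i` (empty product). -/
def chain {n : Type*} [Fintype n] [DecidableEq n]
    (W : ℕ → Matrix n n ℝ) (i j : ℕ) : Matrix n n ℝ :=
  chainAux W i (j + 1 - i)

/-- `blockDiag r m A B` is the `(2r+m)×(2r+m)` block-diagonal matrix `diag(A, B)`
with top-left block `A` (of size `2r×2r`) and bottom-right block `B` (of size `m×m`). -/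
def blockDiag (r m : ℕ) (A : Matrix (Fin (2*r)) (Fin (2*r)) ℝ)
    (B : Matrix (Fin m) (Fin m) ℝ) : Matrix (Fin (2*r + m)) (Fin (2*r + m)) ℝ :=
  Matrix.reindex finSumFinEquiv finSumFinEquiv (Matrix.fromBlocks A 0 0 B)

/-- The `d×2r` matrix formed by the first `2r` columns of a `(2r+m)×(2r+m)` matrix. -/
def cols1 (r m : ℕ) (U : Matrix (Fin (2*r + m)) (Fin (2*r + m)) ℝ) :
    Matrix (Fin (2*r + m)) (Fin (2*r)) ℝ :=
  fun i j => U i (Fin.castAdd m j)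

/-- The `d×m` matrix formed by the last `m` columns of a `(2r+m)×(2r+m)` matrix. -/
def cols2 (r m : ℕ) (U : Matrix (Fin (2*r + m)) (Fin (2*r + m)) ℝ) :
    Matrix (Fin (2*r + m)) (Fin m) ℝ :=
  fun i j => U i (Fin.natAdd (2*r) j)

/-- Squared Frobenius norm: `‖A‖_F² = trace(AᵀA)`. -/
def frobSq {p q : Type*} [Fintype p] [Fintype q] (A : Matrix p q ℝ) : ℝ :=
  Matrix.trace (Aᵀ * A)

/-- Frobenius norm: `‖A‖_F = √(trace(AᵀA))`. -/
def frobNorm {p q : Type*} [Fintype p] [Fintype q] (A : Matrix p q ℝ) : ℝ :=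
  Real.sqrt (Matrix.trace (Aᵀ * A))


theorem statement5_aux
    (r m : ℕ) (hm : 0 < m) (L : ℕ) (hL : 1 ≤ L)
    (Φ : Matrix (Fin (2*r + m)) (Fin (2*r + m)) ℝ) (hΦ : Φ.rank ≤ r)
    (ε : ℕ → ℝ) (hε : ∀ l, 1 ≤ l → l ≤ L → 0 < ε l)
    (W : ℕ → Matrix (Fin (2*r + m)) (Fin (2*r + m)) ℝ)
    (hW0 : ∀ l, 1 ≤ l → l ≤ L →
      W l * (W l)ᵀ = (ε l)^2 • (1 : Matrix (Fin (2*r + m)) (Fin (2*r + m)) ℝ) ∧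
      (W l)ᵀ * W l = (ε l)^2 • (1 : Matrix (Fin (2*r + m)) (Fin (2*r + m)) ℝ))
    (C : Matrix (Fin (2*r + m)) (Fin (2*r + m)) ℝ) :
    ∃ u v : Fin m → (Fin (2*r + m) → ℝ),
      (∀ i j, u i ⬝ᵥ u j = if i = j then (1:ℝ) else 0) ∧
      (∀ i j, v i ⬝ᵥ v j = if i = j then (1:ℝ) else 0) ∧
      (∀ i,
        (W 1) *ᵥ (v i) = ε 1 • u i ∧
        (W 1)ᵀ *ᵥ (u i) = ε 1 • v i ∧
        Φᵀ *ᵥ (C *ᵥ (u i)) = 0 ∧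
        Φ *ᵥ (v i) = 0) := by
  have hε1 : 0 < ε 1 := hε 1 le_rfl hL
  obtain ⟨hW1, hW1'⟩ := hW0 1 le_rfl hL
  set B := Φᵀ * C * W 1 with hB
  have hrkB : B.rank ≤ r := by
    calc B.rank ≤ (Φᵀ * C).rank := Matrix.rank_mul_le_left _ _
    _ ≤ Φᵀ.rank := Matrix.rank_mul_le_left _ _
    _ = Φ.rank := Matrix.rank_transpose Φ
    _ ≤ r := hΦ
  have hkerdim : ∀ A : Matrix (Fin (2*r + m)) (Fin (2*r + m)) ℝ, A.rank ≤ r →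
      2*r + m - r ≤ Module.finrank ℝ (LinearMap.ker A.mulVecLin) := by
    intro A hA
    have h : A.rank + Module.finrank ℝ (LinearMap.ker A.mulVecLin) = 2*r + m := by
      rw [Matrix.rank, LinearMap.finrank_range_add_finrank_ker A.mulVecLin]
      simp
    omega
  set S : Submodule ℝ (EuclideanSpace ℝ (Fin (2*r + m))) :=
    (LinearMap.ker Φ.mulVecLin ⊓ LinearMap.ker B.mulVecLin).map ((WithLp.linearEquiv 2 ℝ (Fin (2*r + m) → ℝ)).symm :
      (Fin (2*r + m) → ℝ) →ₗ[ℝ] EuclideanSpace ℝ (Fin (2*r + m))) with hS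
  have hdimS : m ≤ Module.finrank ℝ S := by
    have h1 := hkerdim Φ hΦ
    have h2 := hkerdim B hrkB
    have h3 := Submodule.finrank_sup_add_finrank_inf_eq
      (LinearMap.ker Φ.mulVecLin) (LinearMap.ker B.mulVecLin)
    have h4 : Module.finrank ℝ
        (LinearMap.ker Φ.mulVecLin ⊔ LinearMap.ker B.mulVecLin :
          Submodule ℝ (Fin (2*r + m) → ℝ)) ≤ 2*r + m := by
      have := Submodule.finrank_le
        (LinearMap.ker Φ.mulVecLin ⊔ LinearMap.ker B.mulVecLin :
          Submodule ℝ (Fin (2*r + m) → ℝ))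
      simpa using this
    have h5 : Module.finrank ℝ S
        = Module.finrank ℝ (LinearMap.ker Φ.mulVecLin ⊓ LinearMap.ker B.mulVecLin :
            Submodule ℝ (Fin (2*r + m) → ℝ)) :=
        (LinearEquiv.finrank_eq ((WithLp.linearEquiv 2 ℝ (Fin (2*r + m) → ℝ)).symm.submoduleMap
          (LinearMap.ker Φ.mulVecLin ⊓ LinearMap.ker B.mulVecLin))).symm
    omega
  let b := stdOrthonormalBasis ℝ S
  have hdim' : m ≤ Module.finrank ℝ S := hdimS
  let f : Fin m → EuclideanSpace ℝ (Fin (2*r + m)) :=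
    fun i => (b (Fin.castLE hdim' i) : EuclideanSpace ℝ (Fin (2*r + m)))
  have hfS : ∀ i, f i ∈ S := fun i => (b _).2
  have hon : Orthonormal ℝ f := by
    have h1 : Orthonormal ℝ (fun i : Fin m => b (Fin.castLE hdim' i)) :=
      b.orthonormal.comp _ (Fin.castLE_injective _)
    exact h1.comp_linearIsometry S.subtypeₗᵢ
  set v : Fin m → (Fin (2*r + m) → ℝ) := fun i => WithLp.ofLp (f i) with hv
  have hvdot : ∀ i j, v i ⬝ᵥ v j = if i = j then (1:ℝ) else 0 := by
    intro i j
    rw [orthonormal_iff_ite] at hon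
    have h := hon i j
    rw [← h]
    have : (inner ℝ (f i) (f j) : ℝ) = v i ⬝ᵥ v j := by
      rw [EuclideanSpace.inner_eq_star_dotProduct, star_trivial]
      exact dotProduct_comm _ _
    rw [this]
  have hvΦ : ∀ i, Φ *ᵥ v i = 0 := fun i => ((Submodule.mem_map_equiv _).mp (hfS i)).1
  have hvB : ∀ i, B *ᵥ v i = 0 := fun i => ((Submodule.mem_map_equiv _).mp (hfS i)).2
  set u : Fin m → (Fin (2*r + m) → ℝ) := fun i => (ε 1)⁻¹ • ((W 1) *ᵥ v i) with hu
  have hWv : ∀ i, (W 1) *ᵥ v i = ε 1 • u i := by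
    intro i
    rw [hu]
    simp [smul_smul, mul_inv_cancel₀ hε1.ne']
  have hWtu : ∀ i, (W 1)ᵀ *ᵥ u i = ε 1 • v i := by
    intro i
    rw [hu]
    simp only [Matrix.mulVec_smul, Matrix.mulVec_mulVec, hW1']
    rw [Matrix.smul_mulVec, Matrix.one_mulVec, smul_smul]
    congr 1
    field_simp
  have hudot : ∀ i j, u i ⬝ᵥ u j = if i = j then (1:ℝ) else 0 := by
    intro i j
    have h1 : u i ⬝ᵥ u j = (ε 1)⁻¹ * ((W 1 *ᵥ v i) ⬝ᵥ u j) := by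
      rw [hu]; simp [smul_dotProduct]
    have h2 : (W 1 *ᵥ v i) ⬝ᵥ u j = v i ⬝ᵥ ((W 1)ᵀ *ᵥ u j) := by
      rw [Matrix.dotProduct_mulVec, Matrix.vecMul_transpose]
    rw [h1, h2, hWtu j, dotProduct_smul, ← hvdot i j]
    field_simp
    rw [smul_eq_mul]
  refine ⟨u, v, hudot, hvdot, fun i => ⟨hWv i, hWtu i, ?_, hvΦ i⟩⟩
  calc Φᵀ *ᵥ (C *ᵥ u i) = (ε 1)⁻¹ • (B *ᵥ v i) := by
        rw [hu]
        simp only [Matrix.mulVec_smul, Matrix.mulVec_mulVec, hB, Matrix.mul_assoc]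
    _ = 0 := by rw [hvB i, smul_zero]

/-- base case of Lemma 1: construction of the orthonormal families
at initialization for the first layer. Here `W l` denotes `W_l(0)` and `d = 2r + m`. -/
theorem statement5
    (r m : ℕ) (hm : 0 < m) (L : ℕ) (hL : 1 ≤ L)
    (Φ : Matrix (Fin (2*r + m)) (Fin (2*r + m)) ℝ) (hΦ : Φ.rank ≤ r)
    (ε : ℕ → ℝ) (hε : ∀ l, 1 ≤ l → l ≤ L → 0 < ε l)
    (W : ℕ → Matrix (Fin (2*r + m)) (Fin (2*r + m)) ℝ)
    (hW0 : ∀ l, 1 ≤ l → l ≤ L →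
      W l * (W l)ᵀ = (ε l)^2 • (1 : Matrix (Fin (2*r + m)) (Fin (2*r + m)) ℝ) ∧
      (W l)ᵀ * W l = (ε l)^2 • (1 : Matrix (Fin (2*r + m)) (Fin (2*r + m)) ℝ)) :
    ∃ u v : Fin m → (Fin (2*r + m) → ℝ),
      (∀ i j, u i ⬝ᵥ u j = if i = j then (1:ℝ) else 0) ∧
      (∀ i j, v i ⬝ᵥ v j = if i = j then (1:ℝ) else 0) ∧
      (∀ i,
        (W 1) *ᵥ (v i) = ε 1 • u i ∧
        (W 1)ᵀ *ᵥ (u i) = ε 1 • v i ∧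
        Φᵀ *ᵥ ((chain W 2 L) *ᵥ (u i)) = 0 ∧
        Φ *ᵥ (v i) = 0) :=
  statement5_aux r m hm L hL Φ hΦ ε hε W hW0 (chain W 2 L)
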